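/- Let Ξ = closure of the convex hull of {f_ℓ / 2^ℓ : ℓ ∈ ℕ} in the supremum norm, where each f_ℓ : Z → [0,1]. Then for every L ∈ ℕ, Ξ admits a 2^{-L}-cover (in sup norm) of cardinality at most (L+1)^{L+1} · 2^{L(L+1)/2}, and consequently the metric entropy integral ∫₀^∞ √(log N(ε, Ξ, ‖·‖_∞)) dε is finite. -/

import Mathlib

open MeasureTheory

lemma cover_aux {Z : Type*} (f : ℕ → Z → ℝ)
    (hf : ∀ ℓ z, f ℓ z ∈ Set.Icc (0 : ℝ) 1)
    (Ξ : Set (Z → ℝ))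
    (hΞ : Ξ = {g : Z → ℝ | ∀ ε > 0,
      ∃ h ∈ convexHull ℝ ((fun ℓ : ℕ => fun z => f ℓ z / 2 ^ ℓ) '' {ℓ : ℕ | 1 ≤ ℓ}),
        ∀ z, |g z - h z| ≤ ε}) (L : ℕ) :
    ∃ T : Finset (Z → ℝ),
        T.card ≤ (L + 1) ^ (L + 1) * 2 ^ (L * (L + 1) / 2) ∧
        ∀ g ∈ Ξ, ∃ h ∈ T, ∀ z, |g z - h z| ≤ ((2 : ℝ) ^ L)⁻¹ := by
  classical
  set K := L + 1 with hK
  set M : ℕ → ℕ := fun ℓ => K * 2 ^ (K - ℓ) with hMdef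
  have hMpos : ∀ ℓ, 0 < M ℓ := fun ℓ => Nat.mul_pos (Nat.succ_pos L) (Nat.pow_pos two_pos)
  let F : (∀ i : Fin K, Fin (M (i.val + 1))) → (Z → ℝ) :=
    fun c z => ∑ i : Fin K, ((c i : ℝ) / (M (i.val + 1) : ℝ)) * (f (i.val + 1) z / 2 ^ (i.val + 1))
  refine ⟨Finset.image F Finset.univ, ?_, ?_⟩
  · calc (Finset.image F Finset.univ).card
        ≤ (Finset.univ : Finset (∀ i : Fin K, Fin (M (i.val + 1)))).card :=
          Finset.card_image_le
      _ = ∏ i : Fin K, M (i.val + 1) := by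
          rw [Finset.card_univ, Fintype.card_pi]; simp
      _ = (L + 1) ^ (L + 1) * 2 ^ (L * (L + 1) / 2) := by
          have h1 : ∀ i : Fin K, M (i.val + 1) = K * 2 ^ (L - i.val) := by
            intro i; simp [hMdef, hK, Nat.succ_sub_succ]
          calc ∏ i : Fin K, M (i.val + 1) = ∏ i : Fin K, K * 2 ^ (L - i.val) :=
                Finset.prod_congr rfl fun i _ => h1 i
            _ = K ^ K * 2 ^ (∑ i : Fin K, (L - i.val)) := by
                rw [Finset.prod_mul_distrib, Finset.prod_const, Finset.prod_pow_eq_pow_sum]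
                simp
            _ = (L + 1) ^ (L + 1) * 2 ^ (L * (L + 1) / 2) := by
                congr 1
                have h3 : ∑ i : Fin K, (L - i.val) = ∑ j ∈ Finset.range K, (L - j) :=
                  Fin.sum_univ_eq_sum_range _ _
                rw [h3, hK]
                have h2 : ∑ j ∈ Finset.range (L + 1), (L - j) = ∑ j ∈ Finset.range (L + 1), j := by
                  have := Finset.sum_range_reflect (fun j => j) (L + 1)
                  simpa using this
                rw [h2, Finset.sum_range_id]
                simp [Nat.mul_comm]
  · intro g hg
    rw [hΞ] at hg
    simp only [Set.mem_setOf_eq] at hg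
    obtain ⟨h, hh, hgh⟩ := hg ((2 : ℝ) ^ (L + 2))⁻¹ (by positivity)
    rw [convexHull_eq] at hh
    obtain ⟨ι, t, w, p, hw0, hw1, hp, hcm⟩ := hh
    have hp' : ∀ i ∈ t, ∃ ℓ : ℕ, 1 ≤ ℓ ∧ (fun z => f ℓ z / 2 ^ ℓ) = p i := by
      intro i hi
      obtain ⟨ℓ, hℓ, heq⟩ := hp i hi
      exact ⟨ℓ, hℓ, heq⟩
    choose! lf hl1 hleq using hp'
    set E := t.image lf with hE
    set a : ℕ → ℝ := fun ℓ => ∑ i ∈ t.filter (fun i => lf i = ℓ), w i with ha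
    have ha0 : ∀ ℓ, 0 ≤ a ℓ := by
      intro ℓ
      apply Finset.sum_nonneg
      intro i hi
      exact hw0 i (Finset.mem_of_mem_filter i hi)
    have haE : ∑ ℓ ∈ E, a ℓ = 1 := by
      rw [ha, hE]
      rw [Finset.sum_fiberwise_of_maps_to (fun i hi => Finset.mem_image_of_mem lf hi)]
      exact hw1
    have ha_out : ∀ ℓ, ℓ ∉ E → a ℓ = 0 := by
      intro ℓ hℓ
      apply Finset.sum_eq_zero
      intro i hi
      have := Finset.mem_filter.mp hi
      exact absurd (this.2 ▸ Finset.mem_image_of_mem lf this.1) hℓ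
    have ha_le1 : ∀ ℓ, a ℓ ≤ 1 := by
      intro ℓ
      by_cases hℓ : ℓ ∈ E
      · rw [← haE]
        exact Finset.single_le_sum (fun ℓ' _ => ha0 ℓ') hℓ
      · rw [ha_out ℓ hℓ]; exact zero_le_one
    have hha : ∀ z, h z = ∑ ℓ ∈ E, a ℓ * (f ℓ z / 2 ^ ℓ) := by
      intro z
      have h1 : h = ∑ i ∈ t, w i • p i := by
        rw [← hcm, Finset.centerMass_eq_of_sum_1 _ _ hw1]
      have h2 : h z = ∑ i ∈ t, w i * p i z := by
        rw [h1]; simp [Finset.sum_apply]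
      rw [h2]
      rw [← Finset.sum_fiberwise_of_maps_to (fun i hi => Finset.mem_image_of_mem lf hi)
        (fun i => w i * p i z)]
      apply Finset.sum_congr rfl
      intro ℓ hℓ
      have hcong : ∀ i ∈ t.filter (fun i => lf i = ℓ), w i * p i z = w i * (f ℓ z / 2 ^ ℓ) := by
        intro i hi
        have hm := Finset.mem_filter.mp hi
        have heq := hleq i hm.1
        rw [hm.2] at heq
        rw [← heq]
      rw [Finset.sum_congr rfl hcong, ← Finset.sum_mul]
    -- discretization
    set b : ℕ → ℝ := fun ℓ =>
      if 1 ≤ ℓ ∧ ℓ ≤ K then ((min (⌊a ℓ * M ℓ⌋₊) (M ℓ - 1) : ℕ) : ℝ) / (M ℓ : ℝ) else 0 with hb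
    let c : ∀ i : Fin K, Fin (M (i.val + 1)) :=
      fun i => ⟨min (⌊a (i.val + 1) * M (i.val + 1)⌋₊) (M (i.val + 1) - 1),
        lt_of_le_of_lt (min_le_right _ _) (Nat.sub_lt (hMpos _) one_pos)⟩
    refine ⟨F c, Finset.mem_image_of_mem F (Finset.mem_univ c), ?_⟩
    intro z
    have hfb : ∀ ℓ : ℕ, |f ℓ z / 2 ^ ℓ| ≤ ((2 : ℝ) ^ ℓ)⁻¹ := by
      intro ℓ
      have h1 := (hf ℓ z).1
      have h2 := (hf ℓ z).2
      rw [abs_of_nonneg (by positivity)]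
      rw [div_le_iff₀ (by positivity : (0:ℝ) < 2 ^ ℓ)]
      rw [inv_mul_cancel₀ (by positivity : (2:ℝ) ^ ℓ ≠ 0)]
      exact h2
    have hFc : F c z = ∑ ℓ ∈ Finset.Icc 1 K, b ℓ * (f ℓ z / 2 ^ ℓ) := by
      have hIcc : ∑ ℓ ∈ Finset.Icc 1 K, b ℓ * (f ℓ z / 2 ^ ℓ)
          = ∑ j ∈ Finset.range K, b (1 + j) * (f (1 + j) z / 2 ^ (1 + j)) := by
        rw [← Finset.Ico_add_one_right_eq_Icc, Finset.sum_Ico_eq_sum_range]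
        simp
      rw [hIcc, ← Fin.sum_univ_eq_sum_range (fun j => b (1 + j) * (f (1 + j) z / 2 ^ (1 + j))) K]
      apply Finset.sum_congr rfl
      intro i _
      have hcond : 1 ≤ i.val + 1 ∧ i.val + 1 ≤ K := ⟨Nat.succ_le_succ (Nat.zero_le _), i.isLt⟩
      have hbv : b (i.val + 1)
          = ((min (⌊a (i.val + 1) * M (i.val + 1)⌋₊) (M (i.val + 1) - 1) : ℕ) : ℝ)
            / (M (i.val + 1) : ℝ) := by
        rw [hb]; exact if_pos hcond
      have h1i : 1 + i.val = i.val + 1 := Nat.add_comm _ _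
      simp only [h1i, hbv]; rfl
    -- union index set
    set B := E ∪ Finset.Icc 1 K with hB
    have hb_out : ∀ ℓ, ℓ ∉ Finset.Icc 1 K → b ℓ = 0 := by
      intro ℓ hℓ
      rw [hb]
      exact if_neg (fun hc => hℓ (Finset.mem_Icc.mpr hc))
    have hdiff : h z - F c z = ∑ ℓ ∈ B, (a ℓ - b ℓ) * (f ℓ z / 2 ^ ℓ) := by
      rw [hha z, hFc]
      rw [Finset.sum_subset (Finset.subset_union_left : E ⊆ B)
        (fun ℓ _ hℓ => by rw [ha_out ℓ hℓ, zero_mul])]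
      rw [Finset.sum_subset (Finset.subset_union_right : Finset.Icc 1 K ⊆ B)
        (fun ℓ _ hℓ => by rw [hb_out ℓ hℓ, zero_mul])]
      rw [← Finset.sum_sub_distrib]
      apply Finset.sum_congr rfl
      intro ℓ _
      ring
    have habs : |h z - F c z| ≤ ∑ ℓ ∈ B, |a ℓ - b ℓ| * ((2 : ℝ) ^ ℓ)⁻¹ := by
      rw [hdiff]
      refine (Finset.abs_sum_le_sum_abs _ _).trans (Finset.sum_le_sum ?_)
      intro ℓ _
      rw [abs_mul]
      exact mul_le_mul_of_nonneg_left (hfb ℓ) (abs_nonneg _)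
    have hsplit : ∑ ℓ ∈ B, |a ℓ - b ℓ| * ((2 : ℝ) ^ ℓ)⁻¹
        = (∑ ℓ ∈ B \ Finset.Icc 1 K, |a ℓ - b ℓ| * ((2 : ℝ) ^ ℓ)⁻¹)
          + ∑ ℓ ∈ Finset.Icc 1 K, |a ℓ - b ℓ| * ((2 : ℝ) ^ ℓ)⁻¹ :=
      (Finset.sum_sdiff (Finset.subset_union_right : Finset.Icc 1 K ⊆ B)).symm
    -- bound on the grid part
    have hbound1 : ∀ ℓ ∈ Finset.Icc 1 K,
        |a ℓ - b ℓ| * ((2 : ℝ) ^ ℓ)⁻¹ ≤ ((K : ℝ) * 2 ^ K)⁻¹ := by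
      intro ℓ hℓ
      obtain ⟨h1ℓ, hℓK⟩ := Finset.mem_Icc.mp hℓ
      have hM0 : (0 : ℝ) < (M ℓ : ℝ) := by exact_mod_cast hMpos ℓ
      set m : ℕ := min (⌊a ℓ * M ℓ⌋₊) (M ℓ - 1) with hm
      have hbℓ : b ℓ = (m : ℝ) / (M ℓ : ℝ) := by rw [hb]; exact if_pos ⟨h1ℓ, hℓK⟩
      have hub : (m : ℝ) ≤ a ℓ * M ℓ := by
        have h1 : (m : ℝ) ≤ (⌊a ℓ * M ℓ⌋₊ : ℝ) := by exact_mod_cast min_le_left _ _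
        exact h1.trans (Nat.floor_le (mul_nonneg (ha0 ℓ) hM0.le))
      have hlb : a ℓ * M ℓ - 1 ≤ (m : ℝ) := by
        rw [hm, Nat.cast_min]
        apply le_min
        · exact (Nat.sub_one_lt_floor _).le
        · have : ((M ℓ - 1 : ℕ) : ℝ) = (M ℓ : ℝ) - 1 := by
            rw [Nat.cast_sub (hMpos ℓ)]; simp
          rw [this]
          have := ha_le1 ℓ
          nlinarith [hM0]
      have habℓ : |a ℓ - b ℓ| ≤ (M ℓ : ℝ)⁻¹ := by
        rw [hbℓ, abs_of_nonneg]
        · rw [sub_le_iff_le_add]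
          calc a ℓ ≤ ((m : ℝ) + 1) / (M ℓ : ℝ) := by
                rw [le_div_iff₀ hM0]; linarith
            _ = (M ℓ : ℝ)⁻¹ + (m : ℝ) / (M ℓ : ℝ) := by field_simp; ring
        · rw [sub_nonneg, div_le_iff₀ hM0]
          exact hub
      have hMpow : (M ℓ : ℝ) * 2 ^ ℓ = (K : ℝ) * 2 ^ K := by
        have : M ℓ * 2 ^ ℓ = K * 2 ^ K := by
          rw [hMdef]
          rw [mul_assoc, ← pow_add, Nat.sub_add_cancel hℓK]
        exact_mod_cast this
      calc |a ℓ - b ℓ| * ((2 : ℝ) ^ ℓ)⁻¹ ≤ (M ℓ : ℝ)⁻¹ * ((2 : ℝ) ^ ℓ)⁻¹ := by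
            exact mul_le_mul_of_nonneg_right habℓ (by positivity)
        _ = ((M ℓ : ℝ) * 2 ^ ℓ)⁻¹ := (mul_inv _ _).symm
        _ = ((K : ℝ) * 2 ^ K)⁻¹ := by rw [hMpow]
    have hsum1 : ∑ ℓ ∈ Finset.Icc 1 K, |a ℓ - b ℓ| * ((2 : ℝ) ^ ℓ)⁻¹ ≤ ((2 : ℝ) ^ K)⁻¹ := by
      have hcard : (Finset.Icc 1 K).card = K := by
        simp [Nat.card_Icc]
      calc ∑ ℓ ∈ Finset.Icc 1 K, |a ℓ - b ℓ| * ((2 : ℝ) ^ ℓ)⁻¹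
          ≤ (Finset.Icc 1 K).card • ((K : ℝ) * 2 ^ K)⁻¹ :=
            Finset.sum_le_card_nsmul _ _ _ hbound1
        _ = (K : ℝ) * ((K : ℝ) * 2 ^ K)⁻¹ := by rw [hcard, nsmul_eq_mul]
        _ = ((2 : ℝ) ^ K)⁻¹ := by
            have hKne : (K : ℝ) ≠ 0 := by positivity
            field_simp
    -- bound on the tail part
    have hsub2 : B \ Finset.Icc 1 K ⊆ E := by
      intro ℓ hℓ
      obtain ⟨hℓB, hℓn⟩ := Finset.mem_sdiff.mp hℓ
      rcases Finset.mem_union.mp hℓB with h' | h'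
      · exact h'
      · exact absurd h' hℓn
    have hbound2 : ∑ ℓ ∈ B \ Finset.Icc 1 K, |a ℓ - b ℓ| * ((2 : ℝ) ^ ℓ)⁻¹
        ≤ ((2 : ℝ) ^ (L + 2))⁻¹ := by
      have hterm : ∀ ℓ ∈ B \ Finset.Icc 1 K,
          |a ℓ - b ℓ| * ((2 : ℝ) ^ ℓ)⁻¹ ≤ a ℓ * ((2 : ℝ) ^ (L + 2))⁻¹ := by
        intro ℓ hℓ
        obtain ⟨hℓB, hℓn⟩ := Finset.mem_sdiff.mp hℓ
        have hℓE : ℓ ∈ E := hsub2 hℓ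
        have h1ℓ : 1 ≤ ℓ := by
          obtain ⟨i, hi, rfl⟩ := Finset.mem_image.mp hℓE
          exact hl1 i hi
        have hℓbig : L + 2 ≤ ℓ := by
          by_contra hcon
          push_neg at hcon
          exact hℓn (Finset.mem_Icc.mpr ⟨h1ℓ, by omega⟩)
        have hbz : b ℓ = 0 := hb_out ℓ hℓn
        rw [hbz, sub_zero, abs_of_nonneg (ha0 ℓ)]
        apply mul_le_mul_of_nonneg_left _ (ha0 ℓ)
        apply inv_anti₀ (by positivity)
        exact pow_le_pow_right₀ one_le_two hℓbig
      calc ∑ ℓ ∈ B \ Finset.Icc 1 K, |a ℓ - b ℓ| * ((2 : ℝ) ^ ℓ)⁻¹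
          ≤ ∑ ℓ ∈ B \ Finset.Icc 1 K, a ℓ * ((2 : ℝ) ^ (L + 2))⁻¹ :=
            Finset.sum_le_sum hterm
        _ = (∑ ℓ ∈ B \ Finset.Icc 1 K, a ℓ) * ((2 : ℝ) ^ (L + 2))⁻¹ :=
            (Finset.sum_mul _ _ _).symm
        _ ≤ 1 * ((2 : ℝ) ^ (L + 2))⁻¹ := by
            apply mul_le_mul_of_nonneg_right _ (by positivity)
            rw [← haE]
            exact Finset.sum_le_sum_of_subset_of_nonneg hsub2 (fun ℓ _ _ => ha0 ℓ)
        _ = ((2 : ℝ) ^ (L + 2))⁻¹ := one_mul _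
    have hhF : |h z - F c z| ≤ ((2 : ℝ) ^ (L + 1))⁻¹ + ((2 : ℝ) ^ (L + 2))⁻¹ := by
      calc |h z - F c z| ≤ ∑ ℓ ∈ B, |a ℓ - b ℓ| * ((2 : ℝ) ^ ℓ)⁻¹ := habs
        _ = _ + _ := hsplit
        _ ≤ ((2 : ℝ) ^ (L + 2))⁻¹ + ((2 : ℝ) ^ K)⁻¹ := add_le_add hbound2 hsum1
        _ = ((2 : ℝ) ^ (L + 1))⁻¹ + ((2 : ℝ) ^ (L + 2))⁻¹ := by rw [hK]; ring
    calc |g z - F c z| ≤ |g z - h z| + |h z - F c z| := by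
          have : g z - F c z = (g z - h z) + (h z - F c z) := by ring
          rw [this]; exact abs_add_le _ _
      _ ≤ ((2 : ℝ) ^ (L + 2))⁻¹ + (((2 : ℝ) ^ (L + 1))⁻¹ + ((2 : ℝ) ^ (L + 2))⁻¹) :=
          add_le_add (hgh z) hhF
      _ = ((2 : ℝ) ^ L)⁻¹ := by
          have h2L : (0 : ℝ) < 2 ^ L := by positivity
          rw [pow_succ, pow_succ]
          field_simp
          ring

noncomputable def NfunDef : ℝ → ℕ :=
  fun ε => if 1 ≤ ε then 1 else 2 ^ (2 * (Nat.clog 2 ⌈ε⁻¹⌉₊ + 1) ^ 2)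

lemma Nfun_meas : Measurable NfunDef := by
  apply Measurable.ite
  · exact measurableSet_Ici
  · exact measurable_const
  · exact (measurable_from_top (f := fun n : ℕ => 2 ^ (2 * (Nat.clog 2 n + 1) ^ 2))).comp
      (Nat.measurable_ceil.comp measurable_inv)

lemma Nfun_integrable :
    IntegrableOn (fun ε => Real.sqrt (Real.log (NfunDef ε))) (Set.Ioi (0 : ℝ)) := by
  have hmeas : Measurable (fun ε : ℝ => Real.sqrt (Real.log (NfunDef ε))) :=
    (measurable_from_top (f := fun n : ℕ => Real.sqrt (Real.log n))).comp Nfun_meas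
  have hIoc : IntegrableOn (fun ε => Real.sqrt (Real.log (NfunDef ε))) (Set.Ioc 0 1) := by
    have hGint : IntegrableOn (fun ε : ℝ => 10 + 8 * ε ^ (-(1/2) : ℝ)) (Set.Ioc 0 1) := by
      apply Integrable.add
      · exact integrableOn_const measure_Ioc_lt_top.ne
      · have h1 := intervalIntegral.intervalIntegrable_rpow' (r := -(1/2))
          (by norm_num) (a := 0) (b := 1)
        rw [intervalIntegrable_iff, Set.uIoc_of_le zero_le_one] at h1
        exact h1.const_mul 8
    apply Integrable.mono' hGint (hmeas.aestronglyMeasurable.restrict)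
    filter_upwards [ae_restrict_mem measurableSet_Ioc] with ε hε
    obtain ⟨hε0, hε1⟩ := hε
    set y := ε ^ (-(1/2) : ℝ) with hy
    have hypos : 0 < y := Real.rpow_pos_of_pos hε0 _
    rw [Real.norm_eq_abs, abs_of_nonneg (Real.sqrt_nonneg _)]
    by_cases h1 : 1 ≤ ε
    · rw [NfunDef, if_pos h1]
      simp only [Nat.cast_one, Real.log_one, Real.sqrt_zero]
      positivity
    · rw [NfunDef, if_neg h1]
      set L := Nat.clog 2 ⌈ε⁻¹⌉₊ with hL
      have hLb : ((L : ℝ) + 1) ≤ 3 + 4 * y := by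
        set n := ⌈ε⁻¹⌉₊ with hn
        rcases le_or_gt n 1 with hn1 | hn2
        · rw [hL, hn, Nat.clog_of_right_le_one hn1]
          norm_num
          nlinarith
        · have hL1 : 1 ≤ L := Nat.clog_pos one_lt_two hn2
          have hp : 2 ^ (L - 1) < n := Nat.pow_pred_clog_lt_self one_lt_two hn2
          have hceil : (n : ℝ) < ε⁻¹ + 1 := Nat.ceil_lt_add_one (by positivity)
          have hpr : (2:ℝ) ^ ((L - 1 : ℕ) : ℕ) ≤ ε⁻¹ := by
            have h1' : (2 ^ (L-1) : ℕ) ≤ n - 1 := by omega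
            have h4 : ((n - 1 : ℕ) : ℝ) = (n:ℝ) - 1 := by
              rw [Nat.cast_sub (by omega)]; simp
            have h2' : ((n - 1 : ℕ) : ℝ) ≤ ε⁻¹ := by rw [h4]; linarith
            calc (2:ℝ) ^ (L - 1 : ℕ) = ((2 ^ (L-1) : ℕ) : ℝ) := by push_cast; ring
              _ ≤ ((n - 1 : ℕ) : ℝ) := by exact_mod_cast h1'
              _ ≤ ε⁻¹ := h2'
          have hlog : ((L - 1 : ℕ) : ℝ) * Real.log 2 ≤ 2 * y := by
            have h5 : Real.log ((2:ℝ) ^ (L - 1 : ℕ)) ≤ Real.log ε⁻¹ :=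
              Real.log_le_log (by positivity) hpr
            rw [Real.log_pow] at h5
            have hy2 : y ^ (2 : ℕ) = ε⁻¹ := by
              rw [hy, ← Real.rpow_natCast (ε ^ (-(1/2):ℝ)) 2, ← Real.rpow_mul hε0.le]
              norm_num
              exact Real.rpow_neg_one ε
            have h6 : Real.log ε⁻¹ = 2 * Real.log y := by
              rw [← hy2, Real.log_pow]; push_cast; ring
            have h7 : Real.log y ≤ y := (Real.log_le_sub_one_of_pos hypos).trans (by linarith)
            calc ((L - 1 : ℕ) : ℝ) * Real.log 2 ≤ Real.log ε⁻¹ := h5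
              _ = 2 * Real.log y := h6
              _ ≤ 2 * y := by linarith
          have hlog2 : (0.6931471803 : ℝ) < Real.log 2 := Real.log_two_gt_d9
          have hcast : ((L - 1 : ℕ) : ℝ) = (L : ℝ) - 1 := by
            rw [Nat.cast_sub hL1]; simp
          rw [hcast] at hlog
          nlinarith
      -- now bound sqrt(log (2^(2(L+1)^2)))
      have hcastpow : ((2 ^ (2 * (L + 1) ^ 2) : ℕ) : ℝ) = (2:ℝ) ^ (2 * (L + 1) ^ 2) := by
        push_cast; ring
      rw [hcastpow, Real.log_pow]
      have hlog2' : Real.log 2 ≤ 1 := by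
        have := Real.log_two_lt_d9
        linarith
      have hstep : Real.sqrt ((2 * (L + 1) ^ 2 : ℕ) * Real.log 2)
          ≤ 2 * ((L:ℝ) + 1) := by
        have hb1 : ((2 * (L + 1) ^ 2 : ℕ) : ℝ) * Real.log 2 ≤ (2 * ((L:ℝ) + 1)) ^ 2 := by
          push_cast
          have hlogpos : 0 < Real.log 2 := Real.log_pos one_lt_two
          nlinarith
        calc Real.sqrt ((2 * (L + 1) ^ 2 : ℕ) * Real.log 2)
            ≤ Real.sqrt ((2 * ((L:ℝ) + 1)) ^ 2) := Real.sqrt_le_sqrt hb1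
          _ = 2 * ((L:ℝ) + 1) := Real.sqrt_sq (by positivity)
      calc Real.sqrt ((2 * (L + 1) ^ 2 : ℕ) * Real.log 2) ≤ 2 * ((L:ℝ) + 1) := hstep
        _ ≤ 2 * (3 + 4 * y) := by linarith
        _ ≤ 10 + 8 * y := by linarith
  have hIoi1 : IntegrableOn (fun ε => Real.sqrt (Real.log (NfunDef ε))) (Set.Ioi (1:ℝ)) := by
    rw [integrableOn_congr_fun (g := fun _ => (0:ℝ)) ?_ measurableSet_Ioi]
    · exact integrableOn_zero
    · intro ε hε
      have h1 : (1:ℝ) ≤ ε := le_of_lt hε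
      simp [NfunDef, if_pos h1]
  have hU : Set.Ioi (0:ℝ) = Set.Ioc 0 1 ∪ Set.Ioi 1 := (Set.Ioc_union_Ioi_eq_Ioi zero_le_one).symm
  rw [hU]
  exact hIoc.union hIoi1

/-- Entropy bound for the sup-norm closed convex hull `Ξ` of the scaled family
`{f_ℓ / 2^ℓ : ℓ ≥ 1}` with `f_ℓ : Z → [0,1]`: for every `L`, `Ξ` admits a `2^{-L}`-cover
(in sup norm) of cardinality at most `(L+1)^{L+1} · 2^{L(L+1)/2}`, and consequently the
metric entropy integral `∫₀^∞ √(log N(ε, Ξ, ‖·‖_∞)) dε` is finite. -/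
theorem entropy_bound_convex_hull {Z : Type*} (f : ℕ → Z → ℝ)
    (hf : ∀ ℓ z, f ℓ z ∈ Set.Icc (0 : ℝ) 1)
    (Ξ : Set (Z → ℝ))
    (hΞ : Ξ = {g : Z → ℝ | ∀ ε > 0,
      ∃ h ∈ convexHull ℝ ((fun ℓ : ℕ => fun z => f ℓ z / 2 ^ ℓ) '' {ℓ : ℕ | 1 ≤ ℓ}),
        ∀ z, |g z - h z| ≤ ε}) :
    (∀ L : ℕ, ∃ T : Finset (Z → ℝ),
        T.card ≤ (L + 1) ^ (L + 1) * 2 ^ (L * (L + 1) / 2) ∧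
        ∀ g ∈ Ξ, ∃ h ∈ T, ∀ z, |g z - h z| ≤ ((2 : ℝ) ^ L)⁻¹) ∧
      ∃ Nfun : ℝ → ℕ,
        (∀ ε > 0, ∃ T : Finset (Z → ℝ), T.card ≤ Nfun ε ∧
          ∀ g ∈ Ξ, ∃ h ∈ T, ∀ z, |g z - h z| ≤ ε) ∧
        IntegrableOn (fun ε => Real.sqrt (Real.log (Nfun ε))) (Set.Ioi (0 : ℝ)) := by
  classical
  refine ⟨fun L => cover_aux f hf Ξ hΞ L, NfunDef, ?_, Nfun_integrable⟩
  intro ε hε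
  by_cases h1 : 1 ≤ ε
  · obtain ⟨T, hT, hcov⟩ := cover_aux f hf Ξ hΞ 0
    refine ⟨T, ?_, ?_⟩
    · rw [NfunDef, if_pos h1]
      simpa using hT
    · intro g hg
      obtain ⟨h, hhT, hb⟩ := hcov g hg
      refine ⟨h, hhT, fun z => (hb z).trans ?_⟩
      simpa using h1
  · set L := Nat.clog 2 ⌈ε⁻¹⌉₊ with hL
    obtain ⟨T, hT, hcov⟩ := cover_aux f hf Ξ hΞ L
    refine ⟨T, ?_, ?_⟩
    · have hcard : (L + 1) ^ (L + 1) * 2 ^ (L * (L + 1) / 2) ≤ 2 ^ (2 * (L + 1) ^ 2) := by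
        have e1 : (L + 1) ^ (L + 1) ≤ 2 ^ (L * (L + 1)) := by
          calc (L + 1) ^ (L + 1) ≤ (2 ^ L) ^ (L + 1) := Nat.pow_le_pow_left (Nat.lt_two_pow_self (n := L)) _
            _ = 2 ^ (L * (L + 1)) := by rw [← pow_mul]
        calc (L + 1) ^ (L + 1) * 2 ^ (L * (L + 1) / 2)
            ≤ 2 ^ (L * (L + 1)) * 2 ^ (L * (L + 1) / 2) := Nat.mul_le_mul_right _ e1
          _ = 2 ^ (L * (L + 1) + L * (L + 1) / 2) := by rw [← pow_add]
          _ ≤ 2 ^ (2 * (L + 1) ^ 2) := by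
              apply Nat.pow_le_pow_right (by norm_num)
              have h1' : L * (L + 1) / 2 ≤ L * (L + 1) := Nat.div_le_self _ _
              have h2' : L * (L + 1) ≤ (L + 1) ^ 2 := by nlinarith
              omega
      have hNv : NfunDef ε = 2 ^ (2 * (L + 1) ^ 2) := by rw [NfunDef, if_neg h1]
      rw [hNv]
      exact hT.trans hcard
    · intro g hg
      obtain ⟨h, hhT, hb⟩ := hcov g hg
      refine ⟨h, hhT, fun z => (hb z).trans ?_⟩
      have hc1 : ε⁻¹ ≤ (2:ℝ) ^ L := by
        calc ε⁻¹ ≤ (⌈ε⁻¹⌉₊ : ℝ) := Nat.le_ceil _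
          _ ≤ ((2 ^ L : ℕ) : ℝ) := by exact_mod_cast Nat.le_pow_clog one_lt_two _
          _ = (2:ℝ) ^ L := by push_cast; ring
      calc ((2:ℝ) ^ L)⁻¹ ≤ (ε⁻¹)⁻¹ := inv_anti₀ (inv_pos.mpr hε) hc1
        _ = ε := inv_inv ε
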